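/- There exists a (necessarily unique) group homomorphism ρ' : W → GL₂(ℚ) with ρ'(r₁) = [[1, 0], [1, −1]], ρ'(r₂) = [[−1, 1], [0, 1]] and ρ'(r₃) = ρ'(r₄) = I₂. This representation is irreducible, and remains irreducible after extension of scalars to ℂ; its character takes the value 0 on r₁ and on r₂, the value 2 on r₃ and on r₄, and the value 0 on r₂r₃. (This is Kondo's irreducible character 2₃ of W, in the convention where r₁, r₂ are reflections in long roots.) -/
import Mathlib


open Matrix

/-- The simple roots `α₁, α₂, α₃, α₄` of the root system of type `F₄` in `ℝ⁴`. -/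
noncomputable def F4SimpleRoot : Fin 4 → (Fin 4 → ℝ)
  | 0 => ![0, 1, -1, 0]
  | 1 => ![0, 0, 1, -1]
  | 2 => ![0, 0, 0, 1]
  | 3 => ![1/2, -1/2, -1/2, -1/2]

namespace F4RepAux

abbrev KPair := (ZMod 2 × ZMod 2) × (ZMod 2 × ZMod 2)

def B1 : ZMod 2 × ZMod 2 := (0, 1)
def B2 : ZMod 2 × ZMod 2 := (1, 0)
def B3 : ZMod 2 × ZMod 2 := (1, 1)

def kact (p : KPair) (a : ZMod 2 × ZMod 2) : ZMod 2 × ZMod 2 :=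
  (a.2 * p.1.1 + a.1 * p.2.1, a.2 * p.1.2 + a.1 * p.2.2)

def kcomp (p₁ p₂ : KPair) : KPair := (kact p₁ p₂.1, kact p₁ p₂.2)

def SL : List KPair := [(B1,B2),(B2,B1),(B1,B3),(B2,B3),(B3,B1),(B3,B2)]

/-- The table of values of the 2-dimensional representation of `S₃`. -/
def T : KPair → Matrix (Fin 2) (Fin 2) ℚ := fun p =>
  if p = (B1,B2) then 1
  else if p = (B2,B1) then !![1,0;1,-1]
  else if p = (B1,B3) then !![-1,1;0,1]
  else if p = (B2,B3) then !![-1,1;-1,0]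
  else if p = (B3,B1) then !![0,-1;1,-1]
  else if p = (B3,B2) then !![0,-1;-1,0]
  else 0

lemma kact_kcomp (p₁ p₂ : KPair) (a : ZMod 2 × ZMod 2) :
    kact (kcomp p₁ p₂) a = kact p₁ (kact p₂ a) := by
  simp only [kact, kcomp, Prod.ext_iff]
  constructor <;> ring

lemma kcomp_mem {p₁ p₂ : KPair} (h₁ : p₁ ∈ SL) (h₂ : p₂ ∈ SL) : kcomp p₁ p₂ ∈ SL := by
  fin_cases h₁ <;> fin_cases h₂ <;> decide

set_option maxHeartbeats 2000000 in
set_option maxRecDepth 40000 in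
lemma T_mul {p₁ p₂ : KPair} (h₁ : p₁ ∈ SL) (h₂ : p₂ ∈ SL) :
    T (kcomp p₁ p₂) = T p₁ * T p₂ := by
  fin_cases h₁ <;> fin_cases h₂ <;>
    simp (config := { decide := true }) only [T, kcomp, kact, B1, B2, B3] <;>
    norm_num [Matrix.mul_fin_two] <;> exact Matrix.one_fin_two

lemma kact_id (a : ZMod 2 × ZMod 2) : kact (B1, B2) a = a := by
  simp [kact, B1, B2]

/-- the invariant (class in the weight-lattice quotient) of a vector -/
noncomputable def qv (v : Fin 4 → ℝ) : ZMod 2 × ZMod 2 :=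
  (((⌊v 0 + v 1⌋ : ℤ) : ZMod 2), ((⌊v 0 + v 2⌋ : ℤ) : ZMod 2))

/-- `v` is an integer vector with even coordinate sum -/
def InE (v : Fin 4 → ℝ) : Prop :=
  ∃ n : Fin 4 → ℤ, (∀ i, v i = (n i : ℝ)) ∧ ((n 0 + n 1 + n 2 + n 3 : ℤ) : ZMod 2) = 0

def bv1 : Fin 4 → ℝ := ![1,1,0,0]
def bv2 : Fin 4 → ℝ := ![1,0,1,0]

lemma InE_bv1 : InE bv1 :=
  ⟨![1,1,0,0], by intro i; fin_cases i <;> norm_num [bv1], by decide⟩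

lemma InE_bv2 : InE bv2 :=
  ⟨![1,0,1,0], by intro i; fin_cases i <;> norm_num [bv2], by decide⟩

lemma qv_eval (v : Fin 4 → ℝ) (n : Fin 4 → ℤ) (h : ∀ i, v i = (n i : ℝ)) :
    qv v = (((n 0 + n 1 : ℤ) : ZMod 2), ((n 0 + n 2 : ℤ) : ZMod 2)) := by
  have h01 : v 0 + v 1 = ((n 0 + n 1 : ℤ) : ℝ) := by rw [h 0, h 1]; push_cast; ring
  have h02 : v 0 + v 2 = ((n 0 + n 2 : ℤ) : ℝ) := by rw [h 0, h 2]; push_cast; ring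
  simp [qv, h01, h02, Int.floor_intCast]

noncomputable def gp (M : Matrix (Fin 4) (Fin 4) ℝ) : KPair :=
  (qv (M.mulVec bv1), qv (M.mulVec bv2))

/-- the master invariant carried through the induction over the Weyl group -/
def Pm (M : Matrix (Fin 4) (Fin 4) ℝ) : Prop :=
  gp M ∈ SL ∧ (∀ v, InE v → InE (M.mulVec v)) ∧
    (∀ v, InE v → qv (M.mulVec v) = kact (gp M) (qv v))

lemma gp_one : gp (1 : Matrix (Fin 4) (Fin 4) ℝ) = (B1, B2) := by
  unfold gp
  rw [Matrix.one_mulVec, Matrix.one_mulVec,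
    qv_eval bv1 ![1,1,0,0] (by intro i; fin_cases i <;> norm_num [bv1]),
    qv_eval bv2 ![1,0,1,0] (by intro i; fin_cases i <;> norm_num [bv2])]
  decide

lemma Pm_one : Pm (1 : Matrix (Fin 4) (Fin 4) ℝ) := by
  refine ⟨by rw [gp_one]; decide, ?_, ?_⟩
  · intro v hv; rwa [Matrix.one_mulVec]
  · intro v hv; rw [Matrix.one_mulVec, gp_one, kact_id]

lemma gp_mul {A B : Matrix (Fin 4) (Fin 4) ℝ} (hA : Pm A) (hB : Pm B) :
    gp (A * B) = kcomp (gp A) (gp B) := by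
  unfold gp kcomp
  rw [← Matrix.mulVec_mulVec, ← Matrix.mulVec_mulVec,
    hA.2.2 _ (hB.2.1 _ InE_bv1), hA.2.2 _ (hB.2.1 _ InE_bv2)]
  rfl

lemma Pm_mul {A B : Matrix (Fin 4) (Fin 4) ℝ} (hA : Pm A) (hB : Pm B) : Pm (A * B) := by
  refine ⟨?_, ?_, ?_⟩
  · rw [gp_mul hA hB]; exact kcomp_mem hA.1 hB.1
  · intro v hv; rw [← Matrix.mulVec_mulVec]; exact hA.2.1 _ (hB.2.1 _ hv)
  · intro v hv
    rw [← Matrix.mulVec_mulVec, hA.2.2 _ (hB.2.1 _ hv), hB.2.2 _ hv, gp_mul hA hB,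
      kact_kcomp]

lemma eq_of_mulVec {M N : Matrix (Fin 4) (Fin 4) ℝ}
    (h : ∀ v, M.mulVec v = N.mulVec v) : M = N := by
  ext i j
  have := congrFun (h (Pi.single j 1)) i
  simpa using this


lemma zmod2_add_self : ∀ a : ZMod 2, a + a = 0 := by decide

@[simp] lemma vec4_0 {A : Type*} (a b c d : A) : ![a,b,c,d] 0 = a := rfl
@[simp] lemma vec4_1 {A : Type*} (a b c d : A) : ![a,b,c,d] 1 = b := rfl
@[simp] lemma vec4_2 {A : Type*} (a b c d : A) : ![a,b,c,d] 2 = c := rfl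
@[simp] lemma vec4_3 {A : Type*} (a b c d : A) : ![a,b,c,d] 3 = d := rfl

end F4RepAux

section Generators

open F4RepAux

variable (r : Fin 4 → GL (Fin 4) ℝ)
variable (hr : ∀ i, ∀ x : Fin 4 → ℝ,
      (r i : Matrix (Fin 4) (Fin 4) ℝ).mulVec x =
        x - (2 * (x ⬝ᵥ F4SimpleRoot i) / (F4SimpleRoot i ⬝ᵥ F4SimpleRoot i)) • F4SimpleRoot i)

include hr

lemma r0_apply (v : Fin 4 → ℝ) :
    ((r 0 : GL (Fin 4) ℝ) : Matrix (Fin 4) (Fin 4) ℝ).mulVec v = ![v 0, v 2, v 1, v 3] := by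
  rw [hr 0]
  funext j
  fin_cases j <;>
    simp [F4SimpleRoot, dotProduct, Fin.sum_univ_four] <;> ring

lemma r1_apply (v : Fin 4 → ℝ) :
    ((r 1 : GL (Fin 4) ℝ) : Matrix (Fin 4) (Fin 4) ℝ).mulVec v = ![v 0, v 1, v 3, v 2] := by
  rw [hr 1]
  funext j
  fin_cases j <;>
    simp [F4SimpleRoot, dotProduct, Fin.sum_univ_four] <;> ring

lemma r2_apply (v : Fin 4 → ℝ) :
    ((r 2 : GL (Fin 4) ℝ) : Matrix (Fin 4) (Fin 4) ℝ).mulVec v = ![v 0, v 1, v 2, -v 3] := by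
  rw [hr 2]
  funext j
  fin_cases j <;>
    simp [F4SimpleRoot, dotProduct, Fin.sum_univ_four] <;> ring

lemma r3_apply (v : Fin 4 → ℝ) :
    ((r 3 : GL (Fin 4) ℝ) : Matrix (Fin 4) (Fin 4) ℝ).mulVec v =
      ![v 0 - (v 0 - v 1 - v 2 - v 3)/2, v 1 + (v 0 - v 1 - v 2 - v 3)/2,
        v 2 + (v 0 - v 1 - v 2 - v 3)/2, v 3 + (v 0 - v 1 - v 2 - v 3)/2] := by
  rw [hr 3]
  funext j
  fin_cases j <;>
    simp [F4SimpleRoot, dotProduct, Fin.sum_univ_four] <;> ring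

lemma gp_r0 : gp ((r 0 : GL (Fin 4) ℝ) : Matrix (Fin 4) (Fin 4) ℝ) = (B2, B1) := by
  unfold gp
  rw [r0_apply r hr, r0_apply r hr,
    qv_eval _ ![1,0,1,0] (by intro i; fin_cases i <;> norm_num [bv1]),
    qv_eval _ ![1,1,0,0] (by intro i; fin_cases i <;> norm_num [bv2])]
  decide

lemma gp_r1 : gp ((r 1 : GL (Fin 4) ℝ) : Matrix (Fin 4) (Fin 4) ℝ) = (B1, B3) := by
  unfold gp
  rw [r1_apply r hr, r1_apply r hr,
    qv_eval _ ![1,1,0,0] (by intro i; fin_cases i <;> norm_num [bv1]),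
    qv_eval _ ![1,0,0,1] (by intro i; fin_cases i <;> norm_num [bv2])]
  decide

lemma gp_r2 : gp ((r 2 : GL (Fin 4) ℝ) : Matrix (Fin 4) (Fin 4) ℝ) = (B1, B2) := by
  unfold gp
  rw [r2_apply r hr, r2_apply r hr,
    qv_eval _ ![1,1,0,0] (by intro i; fin_cases i <;> norm_num [bv1]),
    qv_eval _ ![1,0,1,0] (by intro i; fin_cases i <;> norm_num [bv2])]
  decide

lemma gp_r3 : gp ((r 3 : GL (Fin 4) ℝ) : Matrix (Fin 4) (Fin 4) ℝ) = (B1, B2) := by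
  unfold gp
  rw [r3_apply r hr, r3_apply r hr,
    qv_eval _ ![1,1,0,0] (by intro i; fin_cases i <;> norm_num [bv1]),
    qv_eval _ ![1,0,1,0] (by intro i; fin_cases i <;> norm_num [bv2])]
  decide

lemma Pm_r0 : Pm ((r 0 : GL (Fin 4) ℝ) : Matrix (Fin 4) (Fin 4) ℝ) := by
  refine ⟨by rw [gp_r0 r hr]; decide, ?_, ?_⟩ <;> rintro v ⟨n, hn, hs⟩ <;> rw [r0_apply r hr] <;>
    push_cast at hs
  · refine ⟨![n 0, n 2, n 1, n 3], by intro i; fin_cases i <;> simp [hn 0, hn 1, hn 2, hn 3], ?_⟩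
    show ((n 0 + n 2 + n 1 + n 3 : ℤ) : ZMod 2) = 0
    push_cast
    linear_combination hs
  · rw [qv_eval _ ![n 0, n 2, n 1, n 3]
      (by intro i; fin_cases i <;> simp [hn 0, hn 1, hn 2, hn 3]),
      qv_eval v n hn, gp_r0 r hr]
    simp only [kact, B1, B2, Prod.ext_iff, vec4_0, vec4_1, vec4_2, vec4_3]
    push_cast
    exact ⟨by ring, by ring⟩

lemma Pm_r1 : Pm ((r 1 : GL (Fin 4) ℝ) : Matrix (Fin 4) (Fin 4) ℝ) := by
  refine ⟨by rw [gp_r1 r hr]; decide, ?_, ?_⟩ <;> rintro v ⟨n, hn, hs⟩ <;> rw [r1_apply r hr] <;>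
    push_cast at hs
  · refine ⟨![n 0, n 1, n 3, n 2], by intro i; fin_cases i <;> simp [hn 0, hn 1, hn 2, hn 3], ?_⟩
    show ((n 0 + n 1 + n 3 + n 2 : ℤ) : ZMod 2) = 0
    push_cast
    linear_combination hs
  · rw [qv_eval _ ![n 0, n 1, n 3, n 2]
      (by intro i; fin_cases i <;> simp [hn 0, hn 1, hn 2, hn 3]),
      qv_eval v n hn, gp_r1 r hr]
    simp only [kact, B1, B3, Prod.ext_iff, vec4_0, vec4_1, vec4_2, vec4_3]
    push_cast
    refine ⟨by ring, ?_⟩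
    linear_combination hs - zmod2_add_self (n 0 : ZMod 2) - zmod2_add_self (n 1 : ZMod 2) -
      zmod2_add_self (n 2 : ZMod 2)

lemma Pm_r2 : Pm ((r 2 : GL (Fin 4) ℝ) : Matrix (Fin 4) (Fin 4) ℝ) := by
  refine ⟨by rw [gp_r2 r hr]; decide, ?_, ?_⟩ <;> rintro v ⟨n, hn, hs⟩ <;> rw [r2_apply r hr] <;>
    push_cast at hs
  · refine ⟨![n 0, n 1, n 2, -n 3], by intro i; fin_cases i <;> simp [hn 0, hn 1, hn 2, hn 3], ?_⟩
    show ((n 0 + n 1 + n 2 + -n 3 : ℤ) : ZMod 2) = 0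
    push_cast
    linear_combination hs - zmod2_add_self (n 3 : ZMod 2)
  · rw [qv_eval _ ![n 0, n 1, n 2, -n 3]
      (by intro i; fin_cases i <;> simp [hn 0, hn 1, hn 2, hn 3]),
      qv_eval v n hn, gp_r2 r hr, kact_id]
    simp only [vec4_0, vec4_1, vec4_2, vec4_3]

lemma Pm_r3 : Pm ((r 3 : GL (Fin 4) ℝ) : Matrix (Fin 4) (Fin 4) ℝ) := by
  have key : ∀ v, InE v → ∃ n : Fin 4 → ℤ,
      (∀ i, v i = (n i : ℝ)) ∧ ((n 0 + n 1 + n 2 + n 3 : ℤ) : ZMod 2) = 0 ∧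
      ∃ k : ℤ, n 0 - n 1 - n 2 - n 3 = 2 * k := by
    rintro v ⟨n, hn, hs⟩
    refine ⟨n, hn, hs, ?_⟩
    have hdvd : (2 : ℤ) ∣ (n 0 + n 1 + n 2 + n 3) := by
      have := (ZMod.intCast_zmod_eq_zero_iff_dvd (n 0 + n 1 + n 2 + n 3) 2).mp hs
      exact_mod_cast this
    obtain ⟨m, hm⟩ := hdvd
    exact ⟨m - n 1 - n 2 - n 3, by omega⟩
  have img : ∀ (n : Fin 4 → ℤ) (k : ℤ) (v : Fin 4 → ℝ), (∀ i, v i = (n i : ℝ)) →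
      (n 0 - n 1 - n 2 - n 3 = 2 * k) →
      ∀ i, (![v 0 - (v 0 - v 1 - v 2 - v 3)/2, v 1 + (v 0 - v 1 - v 2 - v 3)/2,
        v 2 + (v 0 - v 1 - v 2 - v 3)/2, v 3 + (v 0 - v 1 - v 2 - v 3)/2] : Fin 4 → ℝ) i =
        ((![n 0 - k, n 1 + k, n 2 + k, n 3 + k] : Fin 4 → ℤ) i : ℝ) := by
    intro n k v hn hk
    have hkr : (n 0 : ℝ) - n 1 - n 2 - n 3 = 2 * k := by exact_mod_cast hk
    intro i
    fin_cases i <;> simp [hn 0, hn 1, hn 2, hn 3] <;> push_cast <;>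
      first
        | linear_combination (-(1:ℝ)/2) * hkr
        | linear_combination ((1:ℝ)/2) * hkr
        | ring
  refine ⟨by rw [gp_r3 r hr]; decide, ?_, ?_⟩ <;> intro v hv <;>
    obtain ⟨n, hn, hs, k, hk⟩ := key v hv <;> rw [r3_apply r hr] <;> push_cast at hs
  · refine ⟨![n 0 - k, n 1 + k, n 2 + k, n 3 + k], img n k v hn hk, ?_⟩
    show ((n 0 - k + (n 1 + k) + (n 2 + k) + (n 3 + k) : ℤ) : ZMod 2) = 0
    push_cast
    linear_combination hs + zmod2_add_self (k : ZMod 2)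
  · rw [qv_eval _ ![n 0 - k, n 1 + k, n 2 + k, n 3 + k] (img n k v hn hk),
      qv_eval v n hn, gp_r3 r hr, kact_id]
    simp only [Prod.ext_iff, vec4_0, vec4_1, vec4_2, vec4_3]
    constructor <;> push_cast <;> ring

lemma r_invol (i : Fin 4) : r i * r i = 1 := by
  have ha : F4SimpleRoot i ⬝ᵥ F4SimpleRoot i ≠ 0 := by
    fin_cases i <;> norm_num [F4SimpleRoot, dotProduct, Fin.sum_univ_four]
  apply Units.ext
  rw [Units.val_mul, Units.val_one]
  apply eq_of_mulVec
  intro v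
  rw [← Matrix.mulVec_mulVec, hr, hr, Matrix.one_mulVec]
  set a := F4SimpleRoot i with hadef
  have key : (v - (2 * (v ⬝ᵥ a) / (a ⬝ᵥ a)) • a) ⬝ᵥ a = -(v ⬝ᵥ a) := by
    rw [sub_dotProduct, smul_dotProduct, smul_eq_mul]
    field_simp
    ring
  rw [key]
  have h2 : 2 * -(v ⬝ᵥ a) / (a ⬝ᵥ a) = -(2 * (v ⬝ᵥ a) / (a ⬝ᵥ a)) := by ring
  rw [h2, neg_smul, sub_neg_eq_add, sub_add_cancel]

end Generators

section Irred

open F4RepAux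

lemma T_id : T (B1, B2) = 1 := by
  simp (config := { decide := true }) only [T, B1, B2, B3]

lemma T_A1 : T (B2, B1) = !![1,0;1,-1] := by
  simp (config := { decide := true }) only [T, B1, B2, B3]

lemma T_A2 : T (B1, B3) = !![-1,1;0,1] := by
  simp (config := { decide := true }) only [T, B1, B2, B3]

lemma map_A1 : (!![1,0;1,-1] : Matrix (Fin 2) (Fin 2) ℚ).map (fun a => (a : ℂ)) =
    (!![1,0;1,-1] : Matrix (Fin 2) (Fin 2) ℂ) := by
  ext i j
  fin_cases i <;> fin_cases j <;> simp [Matrix.map_apply] <;> norm_num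

lemma map_A2 : (!![-1,1;0,1] : Matrix (Fin 2) (Fin 2) ℚ).map (fun a => (a : ℂ)) =
    (!![-1,1;0,1] : Matrix (Fin 2) (Fin 2) ℂ) := by
  ext i j
  fin_cases i <;> fin_cases j <;> simp [Matrix.map_apply] <;> norm_num

lemma irred_aux {F : Type*} [Field F] [CharZero F] (p : Submodule F (Fin 2 → F))
    (h₁ : ∀ x ∈ p, (!![1,0;1,-1] : Matrix (Fin 2) (Fin 2) F).mulVec x ∈ p)
    (h₂ : ∀ x ∈ p, (!![-1,1;0,1] : Matrix (Fin 2) (Fin 2) F).mulVec x ∈ p) :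
    p = ⊥ ∨ p = ⊤ := by
  by_cases hb : p = ⊥
  · exact Or.inl hb
  right
  obtain ⟨x, hxp, hx0⟩ := (Submodule.ne_bot_iff p).mp hb
  have mv1 : ∀ y : Fin 2 → F,
      (!![1,0;1,-1] : Matrix (Fin 2) (Fin 2) F).mulVec y = ![y 0, y 0 - y 1] := by
    intro y; funext j
    fin_cases j <;> simp [Matrix.mulVec, dotProduct, Fin.sum_univ_two] <;> ring
  have mv2 : ∀ y : Fin 2 → F,
      (!![-1,1;0,1] : Matrix (Fin 2) (Fin 2) F).mulVec y = ![-y 0 + y 1, y 1] := by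
    intro y; funext j
    fin_cases j <;> simp [Matrix.mulVec, dotProduct, Fin.sum_univ_two] <;> ring
  have step0 : (![1,0] : Fin 2 → F) ∈ p → (![0,1] : Fin 2 → F) ∈ p := by
    intro h
    have h' := h₁ _ h
    rw [mv1] at h'
    have e : (![0,1] : Fin 2 → F) =
        ![(![1,0] : Fin 2 → F) 0, (![1,0] : Fin 2 → F) 0 - (![1,0] : Fin 2 → F) 1]
          - ![1,0] := by
      funext j; fin_cases j <;> norm_num
    rw [e]
    exact p.sub_mem h' h
  have step1 : (![0,1] : Fin 2 → F) ∈ p → (![1,0] : Fin 2 → F) ∈ p := by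
    intro h
    have h' := h₂ _ h
    rw [mv2] at h'
    have e : (![1,0] : Fin 2 → F) =
        ![-(![0,1] : Fin 2 → F) 0 + (![0,1] : Fin 2 → F) 1, (![0,1] : Fin 2 → F) 1]
          - ![0,1] := by
      funext j; fin_cases j <;> norm_num
    rw [e]
    exact p.sub_mem h' h
  have key : (![1,0] : Fin 2 → F) ∈ p ∧ (![0,1] : Fin 2 → F) ∈ p := by
    by_cases hc : 2 * x 0 - x 1 = 0
    · have hx1 : x 1 = 2 * x 0 := by linear_combination -hc
      have ha : x 0 ≠ 0 := by
        intro h0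
        apply hx0
        funext j; fin_cases j <;> simp [h0, hx1]
      have h3 : (3 : F) * x 0 ≠ 0 := mul_ne_zero (by norm_num) ha
      have hy : (![0,1] : Fin 2 → F) =
          ((3 : F) * x 0)⁻¹ • (x - (!![1,0;1,-1] : Matrix (Fin 2) (Fin 2) F).mulVec x) := by
        rw [mv1]
        funext j
        fin_cases j
        · show (0 : F) = ((3 : F) * x 0)⁻¹ * (x 0 - x 0)
          rw [sub_self, mul_zero]
        · show (1 : F) = ((3 : F) * x 0)⁻¹ * (x 1 - (x 0 - x 1))
          rw [hx1]
          field_simp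
          ring
      have hmem01 : (![0,1] : Fin 2 → F) ∈ p := by
        rw [hy]
        exact p.smul_mem _ (p.sub_mem hxp (h₁ _ hxp))
      exact ⟨step1 hmem01, hmem01⟩
    · have hy : (![1,0] : Fin 2 → F) =
          (2 * x 0 - x 1)⁻¹ • (x - (!![-1,1;0,1] : Matrix (Fin 2) (Fin 2) F).mulVec x) := by
        rw [mv2]
        funext j
        fin_cases j
        · show (1 : F) = (2 * x 0 - x 1)⁻¹ * (x 0 - (-x 0 + x 1))
          field_simp
          ring
        · show (0 : F) = (2 * x 0 - x 1)⁻¹ * (x 1 - x 1)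
          rw [sub_self, mul_zero]
      have hmem10 : (![1,0] : Fin 2 → F) ∈ p := by
        rw [hy]
        exact p.smul_mem _ (p.sub_mem hxp (h₂ _ hxp))
      exact ⟨hmem10, step0 hmem10⟩
  rw [Submodule.eq_top_iff']
  intro v
  have hv : v = v 0 • ![1,0] + v 1 • ![0,1] := by
    funext j; fin_cases j <;> simp
  rw [hv]
  exact p.add_mem (p.smul_mem _ key.1) (p.smul_mem _ key.2)

end Irred

open F4RepAux

/-- There is a unique group homomorphism `ρ'` from the Weyl group `W` of type `F₄` to
`GL₂(ℚ)` (equivalently, a monoid homomorphism to the `2×2` rational matrices, which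
automatically takes values in invertible matrices) with `ρ'(r₁) = [[1, 0], [1, −1]]`,
`ρ'(r₂) = [[−1, 1], [0, 1]]` and `ρ'(r₃) = ρ'(r₄) = I₂`. This representation is
irreducible, remains irreducible after extension of scalars to `ℂ`, and its character
takes the value `0` on `r₁, r₂`, the value `2` on `r₃, r₄` and the value `0` on `r₂r₃`.
(This is Kondo's irreducible character `2₃`.) -/
theorem f4_weyl_group_rep_two_three
    (r : Fin 4 → GL (Fin 4) ℝ)
    (hr : ∀ i, ∀ x : Fin 4 → ℝ,
      (r i : Matrix (Fin 4) (Fin 4) ℝ).mulVec x =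
        x - (2 * (x ⬝ᵥ F4SimpleRoot i) / (F4SimpleRoot i ⬝ᵥ F4SimpleRoot i)) • F4SimpleRoot i)
    (W : Subgroup (GL (Fin 4) ℝ))
    (hW : W = Subgroup.closure (Set.range r))
    (hmem : ∀ i, r i ∈ W) :
    (∃! ρ' : W →* Matrix (Fin 2) (Fin 2) ℚ,
      ρ' ⟨r 0, hmem 0⟩ = !![1, 0; 1, -1] ∧ ρ' ⟨r 1, hmem 1⟩ = !![-1, 1; 0, 1] ∧
      ρ' ⟨r 2, hmem 2⟩ = 1 ∧ ρ' ⟨r 3, hmem 3⟩ = 1) ∧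
    (∀ ρ' : W →* Matrix (Fin 2) (Fin 2) ℚ,
      (ρ' ⟨r 0, hmem 0⟩ = !![1, 0; 1, -1] ∧ ρ' ⟨r 1, hmem 1⟩ = !![-1, 1; 0, 1] ∧
       ρ' ⟨r 2, hmem 2⟩ = 1 ∧ ρ' ⟨r 3, hmem 3⟩ = 1) →
      -- irreducibility over ℚ
      (∀ p : Submodule ℚ (Fin 2 → ℚ),
        (∀ g : W, ∀ x ∈ p, (ρ' g).mulVec x ∈ p) → p = ⊥ ∨ p = ⊤) ∧
      -- irreducibility after extension of scalars to ℂ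
      (∀ q : Submodule ℂ (Fin 2 → ℂ),
        (∀ g : W, ∀ x ∈ q, ((ρ' g).map (fun a => (a : ℂ))).mulVec x ∈ q) →
        q = ⊥ ∨ q = ⊤) ∧
      -- character values
      (ρ' ⟨r 0, hmem 0⟩).trace = 0 ∧ (ρ' ⟨r 1, hmem 1⟩).trace = 0 ∧
      (ρ' ⟨r 2, hmem 2⟩).trace = 2 ∧ (ρ' ⟨r 3, hmem 3⟩).trace = 2 ∧
      (ρ' (⟨r 1, hmem 1⟩ * ⟨r 2, hmem 2⟩)).trace = 0) := by
  subst hW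
  constructor
  · -- existence and uniqueness
    have hPm : ∀ i : Fin 4, Pm ((r i : GL (Fin 4) ℝ) : Matrix (Fin 4) (Fin 4) ℝ) := by
      intro i
      fin_cases i
      exacts [Pm_r0 r hr, Pm_r1 r hr, Pm_r2 r hr, Pm_r3 r hr]
    have master : ∀ u : GL (Fin 4) ℝ, u ∈ Subgroup.closure (Set.range r) →
        Pm ((u : Matrix (Fin 4) (Fin 4) ℝ)) ∧
          Pm (((u⁻¹ : GL (Fin 4) ℝ) : Matrix (Fin 4) (Fin 4) ℝ)) := by
      intro u hu
      induction hu using Subgroup.closure_induction with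
      | mem y hy =>
        obtain ⟨i, rfl⟩ := hy
        have hinv : (r i)⁻¹ = r i := inv_eq_of_mul_eq_one_right (r_invol r hr i)
        exact ⟨hPm i, by rw [hinv]; exact hPm i⟩
      | one =>
        constructor <;> simp only [inv_one, Units.val_one] <;> exact Pm_one
      | mul y z hy hz ihy ihz =>
        refine ⟨?_, ?_⟩
        · rw [Units.val_mul]
          exact Pm_mul ihy.1 ihz.1
        · rw [_root_.mul_inv_rev, Units.val_mul]
          exact Pm_mul ihz.2 ihy.2
      | inv y hy ih =>
        exact ⟨ih.2, by rw [inv_inv]; exact ih.1⟩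
    let ρ : ↥(Subgroup.closure (Set.range r)) →* Matrix (Fin 2) (Fin 2) ℚ :=
      { toFun := fun w => T (gp ((w : GL (Fin 4) ℝ) : Matrix (Fin 4) (Fin 4) ℝ)),
        map_one' := by
          show T (gp ((1 : GL (Fin 4) ℝ) : Matrix (Fin 4) (Fin 4) ℝ)) = 1
          rw [Units.val_one, gp_one, T_id]
        map_mul' := fun a b => by
          have ha := (master a a.2).1
          have hb := (master b b.2).1
          show T (gp _) = T (gp _) * T (gp _)
          have e : (((a * b : ↥(Subgroup.closure (Set.range r))) : GL (Fin 4) ℝ) :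
              Matrix (Fin 4) (Fin 4) ℝ) =
              ((a : GL (Fin 4) ℝ) : Matrix (Fin 4) (Fin 4) ℝ) *
              ((b : GL (Fin 4) ℝ) : Matrix (Fin 4) (Fin 4) ℝ) := rfl
          rw [e, gp_mul ha hb, T_mul ha.1 hb.1] }
    have hρ0 : ρ ⟨r 0, hmem 0⟩ = !![1, 0; 1, -1] := by
      show T (gp _) = _
      rw [gp_r0 r hr, T_A1]
    have hρ1 : ρ ⟨r 1, hmem 1⟩ = !![-1, 1; 0, 1] := by
      show T (gp _) = _
      rw [gp_r1 r hr, T_A2]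
    have hρ2 : ρ ⟨r 2, hmem 2⟩ = 1 := by
      show T (gp _) = _
      rw [gp_r2 r hr, T_id]
    have hρ3 : ρ ⟨r 3, hmem 3⟩ = 1 := by
      show T (gp _) = _
      rw [gp_r3 r hr, T_id]
    refine ⟨ρ, ⟨hρ0, hρ1, hρ2, hρ3⟩, ?_⟩
    rintro σ ⟨hσ0, hσ1, hσ2, hσ3⟩
    refine MonoidHom.ext fun w => ?_
    obtain ⟨x, hx⟩ := w
    induction hx using Subgroup.closure_induction with
    | mem y hy =>
      obtain ⟨i, rfl⟩ := hy
      fin_cases i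
      · exact hσ0.trans hρ0.symm
      · exact hσ1.trans hρ1.symm
      · exact hσ2.trans hρ2.symm
      · exact hσ3.trans hρ3.symm
    | one => exact (σ.map_one).trans (ρ.map_one).symm
    | mul y z hy hz ihy ihz =>
      show σ (⟨y, hy⟩ * ⟨z, hz⟩) = ρ (⟨y, hy⟩ * ⟨z, hz⟩)
      rw [_root_.map_mul, _root_.map_mul, ihy, ihz]
    | inv y hy ih =>
      show σ (⟨y, hy⟩⁻¹) = ρ (⟨y, hy⟩⁻¹)
      have h1 : σ ⟨y, hy⟩⁻¹ * σ ⟨y, hy⟩ = 1 := by rw [← _root_.map_mul, inv_mul_cancel, _root_.map_one]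
      have h2 : ρ ⟨y, hy⟩ * ρ ⟨y, hy⟩⁻¹ = 1 := by rw [← _root_.map_mul, mul_inv_cancel, _root_.map_one]
      calc σ ⟨y, hy⟩⁻¹ = σ ⟨y, hy⟩⁻¹ * (ρ ⟨y, hy⟩ * ρ ⟨y, hy⟩⁻¹) := by rw [h2, mul_one]
        _ = (σ ⟨y, hy⟩⁻¹ * σ ⟨y, hy⟩) * ρ ⟨y, hy⟩⁻¹ := by rw [← ih, mul_assoc]
        _ = ρ ⟨y, hy⟩⁻¹ := by rw [h1, one_mul]
  · -- properties
    rintro σ ⟨h0, h1, h2, h3⟩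
    refine ⟨?_, ?_, ?_, ?_, ?_, ?_, ?_⟩
    · intro p hp
      apply irred_aux p
      · intro x hx
        have := hp ⟨r 0, hmem 0⟩ x hx
        rwa [h0] at this
      · intro x hx
        have := hp ⟨r 1, hmem 1⟩ x hx
        rwa [h1] at this
    · intro q hq
      apply irred_aux q
      · intro x hx
        have := hq ⟨r 0, hmem 0⟩ x hx
        rwa [h0, map_A1] at this
      · intro x hx
        have := hq ⟨r 1, hmem 1⟩ x hx
        rwa [h1, map_A2] at this
    · rw [h0]; norm_num [Matrix.trace_fin_two_of]
    · rw [h1]; norm_num [Matrix.trace_fin_two_of]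
    · rw [h2]; norm_num [Matrix.trace_one]
    · rw [h3]; norm_num [Matrix.trace_one]
    · rw [_root_.map_mul, h1, h2, mul_one]
      norm_num [Matrix.trace_fin_two_of]
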